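/- The finite support product of a family of posets each having the Knaster property has the Knaster property. -/

import Mathlib

/-- A condition of the finite support product of the posets `P i`: a partial
function with finite support. -/
def FSCond {I : Type} (P : I → Type) : Type :=
  { f : ∀ i, Option (P i) // {i | f i ≠ none}.Finite }

/-- The coordinatewise order on the finite support product (with domain
inclusion). -/
def FSLE {I : Type} {P : I → Type} [∀ i, Preorder (P i)] (p q : FSCond P) : Prop :=
  ∀ i, ∀ x, p.1 i = some x → ∃ y, q.1 i = some y ∧ x ≤ y

/-- A poset has the Knaster property if every uncountable subset has an
uncountable pairwise compatible subset. -/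
def KnasterProp (Q : Type) (le : Q → Q → Prop) : Prop :=
  ∀ S : Set Q, ¬ S.Countable →
    ∃ T ⊆ S, ¬ T.Countable ∧ T.Pairwise fun x y => ∃ z, le x z ∧ le y z

section Aux

/-- Δ-system lemma (uncountable version): an uncountable family of finite sets
of fixed size has an uncountable subfamily whose pairwise intersections lie in
a fixed finite set. -/
theorem deltaSystem {I : Type} [DecidableEq I] : ∀ (n : ℕ) (D : Set (Finset I)),
    (∀ s ∈ D, s.card = n) → ¬ D.Countable →
    ∃ (R : Finset I) (E : Set (Finset I)), E ⊆ D ∧ ¬ E.Countable ∧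
      ∀ s ∈ E, ∀ t ∈ E, s ≠ t → s ∩ t ⊆ R := by
  intro n
  induction n with
  | zero =>
    intro D hc hD
    exact absurd ((Set.countable_singleton (∅ : Finset I)).mono
      (fun s hs => Finset.card_eq_zero.mp (hc s hs))) hD
  | succ n ih =>
    intro D hc hD
    by_cases h : ∃ a : I, ¬ {s ∈ D | a ∈ s}.Countable
    · obtain ⟨a, ha⟩ := h
      set Da : Set (Finset I) := {s ∈ D | a ∈ s} with hDa
      have hinj : Set.InjOn (fun s => Finset.erase s a) Da := by
        intro s hs t ht hst
        simp only at hst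
        ext x
        by_cases hx : x = a
        · subst hx; simp [hs.2, ht.2]
        · constructor
          · intro hxs
            have : x ∈ s.erase a := Finset.mem_erase.mpr ⟨hx, hxs⟩
            rw [hst] at this; exact (Finset.mem_erase.mp this).2
          · intro hxt
            have : x ∈ t.erase a := Finset.mem_erase.mpr ⟨hx, hxt⟩
            rw [← hst] at this; exact (Finset.mem_erase.mp this).2
      set D' : Set (Finset I) := (fun s => Finset.erase s a) '' Da with hD'
      have hD'c : ∀ s ∈ D', s.card = n := by
        rintro _ ⟨s, hs, rfl⟩
        rw [Finset.card_erase_of_mem hs.2, hc s hs.1]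
        rfl
      have hD'unc : ¬ D'.Countable := fun hcnt =>
        ha (Set.countable_of_injective_of_countable_image hinj hcnt)
      obtain ⟨R', E', hE'D', hE'unc, hΔ⟩ := ih D' hD'c hD'unc
      refine ⟨insert a R', {s ∈ Da | s.erase a ∈ E'}, fun s hs => hs.1.1, ?_, ?_⟩
      · intro hcnt
        apply hE'unc
        refine (hcnt.image (fun s => Finset.erase s a)).mono ?_
        intro t ht
        obtain ⟨s, hsDa, rfl⟩ := hE'D' ht
        exact ⟨s, ⟨hsDa, ht⟩, rfl⟩
      · intro s hs t ht hst x hx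
        rcases Finset.mem_inter.mp hx with ⟨hxs, hxt⟩
        by_cases hxa : x = a
        · exact Finset.mem_insert.mpr (Or.inl hxa)
        · refine Finset.mem_insert.mpr (Or.inr (hΔ _ hs.2 _ ht.2 ?_
            (Finset.mem_inter.mpr ⟨Finset.mem_erase.mpr ⟨hxa, hxs⟩,
              Finset.mem_erase.mpr ⟨hxa, hxt⟩⟩)))
          intro hee
          exact hst (hinj hs.1 ht.1 hee)
    · push_neg at h
      -- all point-fibers countable; get uncountable pairwise disjoint family via Zorn
      obtain ⟨M, hM⟩ := zorn_subset
        {E : Set (Finset I) | E ⊆ D ∧ E.Pairwise fun s t => s ∩ t = ∅} (by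
          intro c hc hchain
          refine ⟨⋃₀ c, ⟨?_, ?_⟩, fun s hs => Set.subset_sUnion_of_mem hs⟩
          · intro s hs
            obtain ⟨E, hEc, hsE⟩ := hs
            exact (hc hEc).1 hsE
          · intro s hs t ht hst
            obtain ⟨E1, hE1, hs1⟩ := hs
            obtain ⟨E2, hE2, ht2⟩ := ht
            rcases hchain.total hE1 hE2 with hle | hle
            · exact (hc hE2).2 (hle hs1) ht2 hst
            · exact (hc hE1).2 hs1 (hle ht2) hst)
      have hMD : M ⊆ D := hM.prop.1
      have hMpd : M.Pairwise fun s t => s ∩ t = ∅ := hM.prop.2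
      have hMunc : ¬ M.Countable := by
        intro hMc
        have hU : (⋃ s ∈ M, (↑s : Set I)).Countable :=
          hMc.biUnion (fun s _ => s.countable_toSet)
        have hBad : (⋃ a ∈ (⋃ s ∈ M, (↑s : Set I)), {s ∈ D | a ∈ s}).Countable :=
          hU.biUnion (fun a _ => h a)
        have : ¬ D ⊆ (⋃ a ∈ (⋃ s ∈ M, (↑s : Set I)), {s ∈ D | a ∈ s}) := by
          intro hsub
          exact hD (hBad.mono hsub)
        obtain ⟨s, hsD, hsBad⟩ := Set.not_subset.mp this
        -- s is disjoint from every member of M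
        have hdisj : ∀ t ∈ M, s ∩ t = ∅ := by
          intro t htM
          ext x
          simp only [Finset.mem_inter, Finset.notMem_empty, iff_false, not_and]
          intro hxs hxt
          exact hsBad (Set.mem_biUnion (Set.mem_biUnion htM hxt) ⟨hsD, hxs⟩)
        have hsnotM : s ∉ M := by
          intro hsM
          have hcard := hc s hsD
          have hne : s.Nonempty := Finset.card_pos.mp (by omega)
          obtain ⟨x, hx⟩ := hne
          have := hdisj s hsM
          have : x ∈ s ∩ s := Finset.mem_inter.mpr ⟨hx, hx⟩
          rw [hdisj s hsM] at this
          exact Finset.notMem_empty x this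
        have hmem : insert s M ∈ {E : Set (Finset I) | E ⊆ D ∧ E.Pairwise fun s t => s ∩ t = ∅} := by
          refine ⟨Set.insert_subset hsD hMD, ?_⟩
          intro u hu v hv huv
          rcases hu with rfl | hu <;> rcases hv with rfl | hv
          · exact absurd rfl huv
          · exact hdisj v hv
          · rw [Finset.inter_comm]; exact hdisj u hu
          · exact hMpd hu hv huv
        have := hM.eq_of_subset hmem (Set.subset_insert s M)
        exact hsnotM (this ▸ Set.mem_insert s M)
      refine ⟨∅, M, hMD, hMunc, ?_⟩
      intro s hs t ht hst
      rw [hMpd hs ht hst]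
    
variable {I : Type} {P : I → Type} [∀ i, Preorder (P i)]

/-- Compatibility of two conditions at one coordinate. -/
def compatAt (i : I) (p q : FSCond P) : Prop :=
  ∀ x y, p.1 i = some x → q.1 i = some y → ∃ z, x ≤ z ∧ y ≤ z

theorem refineAt (hP : ∀ i, KnasterProp (P i) (· ≤ ·)) (i : I) (A : Set (FSCond P))
    (hA : ¬ A.Countable) :
    ∃ B ⊆ A, ¬ B.Countable ∧ ∀ p ∈ B, ∀ q ∈ B, compatAt i p q := by
  classical
  by_cases him : ((fun p : FSCond P => p.1 i) '' A).Countable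
  · have hfib : ¬ ∀ v ∈ (fun p : FSCond P => p.1 i) '' A, {p ∈ A | p.1 i = v}.Countable := by
      intro hall
      apply hA
      have hsub : A ⊆ ⋃ v ∈ (fun p : FSCond P => p.1 i) '' A, {p ∈ A | p.1 i = v} :=
        fun p hp => Set.mem_biUnion ⟨p, hp, rfl⟩ ⟨hp, rfl⟩
      exact (him.biUnion hall).mono hsub
    push_neg at hfib
    obtain ⟨v, _, hfibunc⟩ := hfib
    refine ⟨{p ∈ A | p.1 i = v}, fun p hp => hp.1, hfibunc, ?_⟩
    rintro p hp q hq x y hx hy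
    rw [hp.2] at hx
    rw [hq.2] at hy
    exact ⟨x, le_refl x, le_of_eq (Option.some.inj (hx.symm.trans hy)).symm⟩
  · set V : Set (P i) := {x | some x ∈ (fun p : FSCond P => p.1 i) '' A} with hV
    have hVunc : ¬ V.Countable := by
      intro hVc
      apply him
      have hsub : (fun p : FSCond P => p.1 i) '' A ⊆ insert none (Option.some '' V) := by
        rintro _ ⟨p, hp, rfl⟩
        cases hpi : p.1 i with
        | none => simp only [hpi]; exact Set.mem_insert _ _
        | some x =>
          simp only [hpi]
          exact Set.mem_insert_of_mem _
            ⟨x, (⟨p, hp, hpi⟩ : some x ∈ (fun p : FSCond P => p.1 i) '' A), rfl⟩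
      exact ((hVc.image _).insert none).mono hsub
    obtain ⟨W, hWV, hWunc, hWpair⟩ := hP i V hVunc
    refine ⟨{p ∈ A | ∀ x, p.1 i = some x → x ∈ W}, fun p hp => hp.1, ?_, ?_⟩
    · intro hBc
      apply hWunc
      have hWsub : Option.some '' W ⊆
          (fun p : FSCond P => p.1 i) '' {p ∈ A | ∀ x, p.1 i = some x → x ∈ W} := by
        rintro _ ⟨w, hw, rfl⟩
        obtain ⟨p, hpA, hpi⟩ := hWV hw
        exact ⟨p, ⟨hpA, fun x hx => (Option.some.inj (hpi.symm.trans hx)) ▸ hw⟩, hpi⟩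
      have : (Option.some '' W).Countable := ((hBc.image _).mono hWsub)
      exact Set.countable_of_injective_of_countable_image
        (fun a _ b _ h => Option.some.inj h) this
    · rintro p hp q hq
      intro x y hx hy
      have hxW := hp.2 x hx
      have hyW := hq.2 y hy
      by_cases hxy : x = y
      · exact ⟨x, le_refl x, le_of_eq hxy.symm⟩
      · exact hWpair hxW hyW hxy

theorem refineFinset (hP : ∀ i, KnasterProp (P i) (· ≤ ·)) (R : Finset I) :
    ∀ A : Set (FSCond P), ¬ A.Countable →
    ∃ B ⊆ A, ¬ B.Countable ∧ ∀ i ∈ R, ∀ p ∈ B, ∀ q ∈ B, compatAt i p q := by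
  classical
  induction R using Finset.induction_on with
  | empty => intro A hA; exact ⟨A, subset_rfl, hA, by simp⟩
  | @insert a s ha ih =>
    intro A hA
    obtain ⟨B, hBA, hBunc, hB⟩ := ih A hA
    obtain ⟨C, hCB, hCunc, hC⟩ := refineAt hP a B hBunc
    refine ⟨C, hCB.trans hBA, hCunc, ?_⟩
    intro i hi p hp q hq
    rcases Finset.mem_insert.mp hi with rfl | hi
    · exact hC p hp q hq
    · exact hB i hi p (hCB hp) q (hCB hq)

/-- Merge of two conditions, taking a common upper bound where both are defined
and one exists. -/
noncomputable def merge (p q : FSCond P) : FSCond P :=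
  ⟨fun i => match p.1 i, q.1 i with
    | none, b => b
    | some x, none => some x
    | some x, some y => some (@Classical.epsilon _ ⟨x⟩ fun w => x ≤ w ∧ y ≤ w),
   by
     apply (p.2.union q.2).subset
     intro i hi
     simp only [Set.mem_setOf_eq] at hi
     by_contra hcon
     simp only [Set.mem_union, Set.mem_setOf_eq, not_or, not_not] at hcon
     rw [hcon.1, hcon.2] at hi
     exact hi rfl⟩

end Aux

/-- The finite support product of a family of posets each having the Knaster
property has the Knaster property. -/
theorem knaster_finite_support_product {I : Type} (P : I → Type)
    [∀ i, Preorder (P i)]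
    (hP : ∀ i, KnasterProp (P i) (· ≤ ·)) :
    KnasterProp (FSCond P) FSLE := by
  classical
  intro S hS
  -- Step 1: an uncountable subset whose supports form a Δ-system with root `R`
  have step1 : ∃ (R : Finset I) (A : Set (FSCond P)), A ⊆ S ∧ ¬ A.Countable ∧
      ∀ p ∈ A, ∀ q ∈ A, p ≠ q → p.2.toFinset ∩ q.2.toFinset ⊆ R := by
    by_cases hfib : ∃ s : Finset I, ¬ {p ∈ S | p.2.toFinset = s}.Countable
    · obtain ⟨s, hs⟩ := hfib
      refine ⟨s, _, fun p hp => hp.1, hs, ?_⟩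
      intro p hp q hq _ x hx
      rw [hp.2, hq.2, Finset.inter_self] at hx
      exact hx
    · push_neg at hfib
      have hDunc : ¬ ((fun p : FSCond P => p.2.toFinset) '' S).Countable := by
        intro hc
        apply hS
        have hsub : S ⊆ ⋃ s ∈ (fun p : FSCond P => p.2.toFinset) '' S,
            {p ∈ S | p.2.toFinset = s} :=
          fun p hp => Set.mem_biUnion ⟨p, hp, rfl⟩ ⟨hp, rfl⟩
        exact ((hc.biUnion fun s _ => hfib s).mono hsub)
      set D := (fun p : FSCond P => p.2.toFinset) '' S with hD
      have hcard : ¬ ∀ n : ℕ, {s ∈ D | s.card = n}.Countable := by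
        intro hall
        apply hDunc
        have hsub : D ⊆ ⋃ n : ℕ, {s ∈ D | s.card = n} :=
          fun s hs => Set.mem_iUnion.mpr ⟨s.card, hs, rfl⟩
        exact ((Set.countable_iUnion hall).mono hsub)
      push_neg at hcard
      obtain ⟨n, hn⟩ := hcard
      obtain ⟨R, E, hED, hEunc, hΔ⟩ := deltaSystem n {s ∈ D | s.card = n}
        (fun s hs => hs.2) hn
      have hch : ∀ s : E, ∃ p, p ∈ S ∧ p.2.toFinset = (s : Finset I) :=
        fun s => (hED s.2).1
      choose g hg1 hg2 using hch
      refine ⟨R, Set.range g, ?_, ?_, ?_⟩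
      · rintro _ ⟨s, rfl⟩; exact hg1 s
      · intro hc
        apply hEunc
        have hsub : E ⊆ (fun p : FSCond P => p.2.toFinset) '' Set.range g := by
          intro s hs
          exact ⟨g ⟨s, hs⟩, ⟨⟨s, hs⟩, rfl⟩, hg2 ⟨s, hs⟩⟩
        exact ((hc.image _).mono hsub)
      · rintro _ ⟨s, rfl⟩ _ ⟨t, rfl⟩ hne
        rw [hg2 s, hg2 t]
        exact hΔ s s.2 t t.2 (fun h => hne (congrArg g (Subtype.ext h)))
  obtain ⟨R, A, hAS, hAunc, hΔ⟩ := step1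
  obtain ⟨B, hBA, hBunc, hB⟩ := refineFinset hP R A hAunc
  refine ⟨B, hBA.trans hAS, hBunc, ?_⟩
  intro p hp q hq hne
  have hroot : ∀ i x y, p.1 i = some x → q.1 i = some y → i ∈ R := by
    intro i x y hx hy
    refine hΔ p (hBA hp) q (hBA hq) hne (Finset.mem_inter.mpr ⟨?_, ?_⟩)
    · exact p.2.mem_toFinset.mpr (by simp only [Set.mem_setOf_eq, hx]; exact fun h => Option.some_ne_none _ h)
    · exact q.2.mem_toFinset.mpr (by simp only [Set.mem_setOf_eq, hy]; exact fun h => Option.some_ne_none _ h)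
  refine ⟨merge p q, ?_, ?_⟩
  · intro i x hx
    cases hq' : q.1 i with
    | none =>
      refine ⟨x, ?_, le_refl x⟩
      simp only [merge, hx, hq']
    | some y =>
      have hcomp : ∃ w, x ≤ w ∧ y ≤ w :=
        hB i (hroot i x y hx hq') p hp q hq x y hx hq'
      haveI : Nonempty (P i) := ⟨x⟩
      refine ⟨Classical.epsilon fun w => x ≤ w ∧ y ≤ w, ?_,
        (Classical.epsilon_spec hcomp).1⟩
      simp only [merge, hx, hq']
  · intro i y hy
    cases hp' : p.1 i with
    | none =>
      refine ⟨y, ?_, le_refl y⟩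
      simp only [merge, hp', hy]
    | some x =>
      have hcomp : ∃ w, x ≤ w ∧ y ≤ w :=
        hB i (hroot i x y hp' hy) p hp q hq x y hp' hy
      haveI : Nonempty (P i) := ⟨x⟩
      refine ⟨Classical.epsilon fun w => x ≤ w ∧ y ≤ w, ?_,
        (Classical.epsilon_spec hcomp).2⟩
      simp only [merge, hp', hy]
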